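/- For every β > 0, the integral over ℝ³ minus the unit ball of |∇s_β|², where s_β(r) = √((β²+1)/(β²+r²)) is radial, equals (π/2)·(5β + 3β³ + 3(1+β²)²·arctan(β))/(β(1+β²)). -/

import Mathlib

open MeasureTheory Real

open Set Filter Topology in
private lemma aux_grad_eq (β : ℝ) (hβ : 0 < β) (x : EuclideanSpace ℝ (Fin 3)) :
    gradient (fun y : EuclideanSpace ℝ (Fin 3) =>
        Real.sqrt ((β ^ 2 + 1) / (β ^ 2 + ‖y‖ ^ 2))) x
      = (-(Real.sqrt (β ^ 2 + 1)) / ((β ^ 2 + ‖x‖ ^ 2) * Real.sqrt (β ^ 2 + ‖x‖ ^ 2))) • x := by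
  have hq : 0 < β ^ 2 + ‖x‖ ^ 2 := by positivity
  have hsq : Real.sqrt (β ^ 2 + ‖x‖ ^ 2) ≠ 0 := by positivity
  apply HasGradientAt.gradient
  rw [hasGradientAt_iff_hasFDerivAt]
  have h1 : HasFDerivAt (fun y : EuclideanSpace ℝ (Fin 3) => ‖y‖ ^ 2) (2 • (innerSL ℝ x)) x :=
    (hasStrictFDerivAt_norm_sq x).hasFDerivAt
  have h2 : HasDerivAt (fun t : ℝ => Real.sqrt ((β ^ 2 + 1) / (β ^ 2 + t)))
      (-(Real.sqrt (β ^ 2 + 1)) / (2 * ((β ^ 2 + ‖x‖ ^ 2) * Real.sqrt (β ^ 2 + ‖x‖ ^ 2))))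
      (‖x‖ ^ 2) := by
    have heq : (fun t : ℝ => Real.sqrt ((β ^ 2 + 1) / (β ^ 2 + t)))
        = fun t : ℝ => Real.sqrt (β ^ 2 + 1) / Real.sqrt (β ^ 2 + t) := by
      funext t; exact Real.sqrt_div (by positivity) _
    rw [heq]
    have hs : HasDerivAt (fun t : ℝ => Real.sqrt (β ^ 2 + t))
        (1 / (2 * Real.sqrt (β ^ 2 + ‖x‖ ^ 2))) (‖x‖ ^ 2) := by
      have := ((hasDerivAt_id (‖x‖ ^ 2)).const_add (β ^ 2)).sqrt (by positivity)
      simpa using this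
    have := (hasDerivAt_const (‖x‖ ^ 2) (Real.sqrt (β ^ 2 + 1))).div hs hsq
    refine this.congr_deriv ?_
    symm
    rw [Real.sq_sqrt hq.le]
    rw [div_eq_div_iff (by positivity) hq.ne']
    field_simp
    ring
  have h3 := h2.comp_hasFDerivAt x h1
  refine h3.congr_fderiv ?_
  ext w
  simp only [InnerProductSpace.toDual_apply_apply, ContinuousLinearMap.smul_apply,
    ContinuousLinearMap.comp_apply, innerSL_apply_apply, real_inner_smul_left, smul_eq_mul]
  have hne : β ^ 2 * Real.sqrt (β ^ 2 + ‖x‖ ^ 2) + ‖x‖ ^ 2 * Real.sqrt (β ^ 2 + ‖x‖ ^ 2) ≠ 0 := by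
    positivity
  field_simp
  ring

open Set Filter Topology in
private lemma aux_norm_grad (β : ℝ) (hβ : 0 < β) (x : EuclideanSpace ℝ (Fin 3)) :
    ‖gradient (fun y : EuclideanSpace ℝ (Fin 3) =>
        Real.sqrt ((β ^ 2 + 1) / (β ^ 2 + ‖y‖ ^ 2))) x‖ ^ 2
      = (β ^ 2 + 1) * ‖x‖ ^ 2 / (β ^ 2 + ‖x‖ ^ 2) ^ 3 := by
  have hq : 0 < β ^ 2 + ‖x‖ ^ 2 := by positivity
  rw [aux_grad_eq β hβ x, norm_smul, mul_pow, Real.norm_eq_abs, sq_abs]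
  have hc : (-(Real.sqrt (β ^ 2 + 1)) / ((β ^ 2 + ‖x‖ ^ 2) * Real.sqrt (β ^ 2 + ‖x‖ ^ 2))) ^ 2
      = (β ^ 2 + 1) / (β ^ 2 + ‖x‖ ^ 2) ^ 3 := by
    rw [div_pow, neg_sq, Real.sq_sqrt (by positivity : (0:ℝ) ≤ β ^ 2 + 1), mul_pow,
      Real.sq_sqrt hq.le]
    ring
  rw [hc]
  ring

open Set Filter Topology in
private lemma aux_radial_int (β : ℝ) (hβ : 0 < β) :
    ∫ r in Ioi (1:ℝ), (β ^ 2 + 1) * r ^ 4 / (β ^ 2 + r ^ 2) ^ 3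
      = 3 * (β ^ 2 + 1) / (8 * β) * Real.arctan β + 5 / 8 - β ^ 2 / (4 * (β ^ 2 + 1)) := by
  set F : ℝ → ℝ := fun r => (β ^ 2 + 1) *
    (3 / (8 * β) * Real.arctan (r / β) - 5 / 8 * (r / (β ^ 2 + r ^ 2))
      + β ^ 2 / 4 * (r / (β ^ 2 + r ^ 2) ^ 2)) with hF
  have hq : ∀ r : ℝ, (0:ℝ) < β ^ 2 + r ^ 2 := fun r => by positivity
  have hderiv : ∀ r ∈ Ici (1:ℝ), HasDerivAt F ((β ^ 2 + 1) * r ^ 4 / (β ^ 2 + r ^ 2) ^ 3) r := by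
    intro r _
    have h1 : HasDerivAt (fun r : ℝ => Real.arctan (r / β)) (1 / (1 + (r / β) ^ 2) * (1 / β)) r := by
      have := (Real.hasDerivAt_arctan (r / β)).comp r ((hasDerivAt_id r).div_const β)
      simpa [Function.comp_def] using this
    have h2 : HasDerivAt (fun r : ℝ => r / (β ^ 2 + r ^ 2))
        ((1 * (β ^ 2 + r ^ 2) - r * (2 * r)) / (β ^ 2 + r ^ 2) ^ 2) r := by
      have : HasDerivAt (fun r : ℝ => r / (β ^ 2 + r ^ 2)) _ r := (hasDerivAt_id r).div (((hasDerivAt_id r).pow 2).const_add (β ^ 2)) (hq r).ne'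
      simpa using this
    have h3 : HasDerivAt (fun r : ℝ => r / (β ^ 2 + r ^ 2) ^ 2)
        ((1 * ((β ^ 2 + r ^ 2) ^ 2) - r * (2 * (β ^ 2 + r ^ 2) * (2 * r))) / ((β ^ 2 + r ^ 2) ^ 2) ^ 2) r := by
      have hp : HasDerivAt (fun r : ℝ => (β ^ 2 + r ^ 2) ^ 2)
          (2 * (β ^ 2 + r ^ 2) * (2 * r)) r := by
        have : HasDerivAt (fun r : ℝ => (β ^ 2 + r ^ 2) ^ 2) _ r := (((hasDerivAt_id r).pow 2).const_add (β ^ 2)).pow 2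
        simpa [mul_comm, mul_assoc, mul_left_comm] using this
      have : HasDerivAt (fun r : ℝ => r / (β ^ 2 + r ^ 2) ^ 2) _ r := (hasDerivAt_id r).div hp (pow_ne_zero 2 (hq r).ne')
      simpa using this
    have := (((h1.const_mul (3 / (8 * β))).sub (h2.const_mul (5 / 8))).add
      (h3.const_mul (β ^ 2 / 4))).const_mul (β ^ 2 + 1)
    refine this.congr_deriv ?_
    have h1pos : (0:ℝ) < 1 + (r / β) ^ 2 := by positivity
    field_simp
    ring
  have hb : Tendsto (fun r : ℝ => r / (β ^ 2 + r ^ 2)) atTop (𝓝 0) := by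
    apply squeeze_zero' (eventually_atTop.2 ⟨0, fun r hr => div_nonneg hr (hq r).le⟩)
      (eventually_atTop.2 ⟨1, fun r hr => ?_⟩) tendsto_inv_atTop_zero
    have hr0 : (0:ℝ) < r := lt_of_lt_of_le one_pos hr
    rw [div_le_iff₀ (hq r), ← sub_nonneg]
    have : r⁻¹ * (β ^ 2 + r ^ 2) - r = β ^ 2 / r := by field_simp; ring
    rw [this]; positivity
  have hc : Tendsto (fun r : ℝ => r / (β ^ 2 + r ^ 2) ^ 2) atTop (𝓝 0) := by
    apply squeeze_zero' (eventually_atTop.2 ⟨0, fun r hr => div_nonneg hr (by positivity)⟩)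
      (eventually_atTop.2 ⟨1, fun r hr => ?_⟩) tendsto_inv_atTop_zero
    have hr0 : (0:ℝ) < r := lt_of_lt_of_le one_pos hr
    rw [div_le_iff₀ (by positivity : (0:ℝ) < (β ^ 2 + r ^ 2) ^ 2), ← sub_nonneg]
    have h4 : r ^ 4 ≤ (β ^ 2 + r ^ 2) ^ 2 := by nlinarith
    have h1 : r ≤ r ^ 3 := by nlinarith
    calc (0:ℝ) ≤ r ^ 3 - r := by linarith
    _ ≤ r⁻¹ * (β ^ 2 + r ^ 2) ^ 2 - r := by
        have : r ^ 3 = r⁻¹ * r ^ 4 := by field_simp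
        rw [this]
        have := mul_le_mul_of_nonneg_left h4 (inv_nonneg.2 hr0.le)
        linarith
  have ha : Tendsto (fun r : ℝ => Real.arctan (r / β)) atTop (𝓝 (π / 2)) := by
    have h : Tendsto (fun r : ℝ => r / β) atTop atTop := tendsto_id.atTop_div_const hβ
    exact (Real.tendsto_arctan_atTop.mono_right nhdsWithin_le_nhds).comp h
  have hlim : Tendsto F atTop (𝓝 ((β ^ 2 + 1) *
      (3 / (8 * β) * (π / 2) - 5 / 8 * 0 + β ^ 2 / 4 * 0))) := by
    exact (((ha.const_mul (3 / (8 * β))).sub (hb.const_mul (5 / 8))).add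
      (hc.const_mul (β ^ 2 / 4))).const_mul (β ^ 2 + 1)
  have key := integral_Ioi_of_hasDerivAt_of_nonneg' hderiv
    (fun r _ => by positivity) hlim
  rw [key, hF]
  simp only
  rw [one_div, Real.arctan_inv_of_pos hβ]
  have h1 : (β ^ 2 + 1) ≠ 0 := by positivity
  field_simp
  ring

/-- For every β > 0, the integral over ℝ³ minus the unit ball of `|∇s_β|²`,
where `s_β(x) = √((β²+1)/(β²+|x|²))`, equals
`(π/2)·(5β + 3β³ + 3(1+β²)²·arctan β)/(β(1+β²))`. -/
theorem stmt0 (β : ℝ) (hβ : 0 < β) :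
    (∫ x in {x : EuclideanSpace ℝ (Fin 3) | 1 ≤ ‖x‖},
      ‖gradient (fun y : EuclideanSpace ℝ (Fin 3) =>
        Real.sqrt ((β ^ 2 + 1) / (β ^ 2 + ‖y‖ ^ 2))) x‖ ^ 2) =
      (π / 2) * ((5 * β + 3 * β ^ 3 + 3 * (1 + β ^ 2) ^ 2 * Real.arctan β) /
        (β * (1 + β ^ 2))) := by
  open Set Filter Topology in
  set h : ℝ → ℝ := fun r =>
    (Set.Ici (1:ℝ)).indicator (fun r => (β ^ 2 + 1) * r ^ 2 / (β ^ 2 + r ^ 2) ^ 3) r with hh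
  have hS : MeasurableSet {x : EuclideanSpace ℝ (Fin 3) | 1 ≤ ‖x‖} :=
    measurableSet_le measurable_const measurable_norm
  have step1 : (∫ x in {x : EuclideanSpace ℝ (Fin 3) | 1 ≤ ‖x‖},
      ‖gradient (fun y : EuclideanSpace ℝ (Fin 3) => Real.sqrt ((β ^ 2 + 1) / (β ^ 2 + ‖y‖ ^ 2))) x‖ ^ 2)
      = ∫ x : EuclideanSpace ℝ (Fin 3), h ‖x‖ := by
    rw [← integral_indicator hS]
    congr 1
    funext x
    by_cases hx : 1 ≤ ‖x‖
    · simp [hh, Set.indicator_apply, Set.mem_Ici, Set.mem_setOf_eq, hx, aux_norm_grad β hβ x]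
    · simp [hh, Set.indicator_apply, Set.mem_Ici, Set.mem_setOf_eq, hx]
  rw [step1, MeasureTheory.integral_fun_norm_addHaar (volume : Measure (EuclideanSpace ℝ (Fin 3))) h]
  have hdim : Module.finrank ℝ (EuclideanSpace ℝ (Fin 3)) = 3 := finrank_euclideanSpace_fin
  rw [hdim]
  have hvol : (volume (Metric.ball (0 : EuclideanSpace ℝ (Fin 3)) 1)).toReal = 4 * π / 3 := by
    rw [EuclideanSpace.volume_ball]
    have hcard : (Fintype.card (Fin 3)) = 3 := by simp
    rw [hcard]
    have hG : Real.Gamma ((3:ℝ)/2 + 1) = 3 / 4 * Real.sqrt π := by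
      rw [Real.Gamma_add_one (by norm_num)]
      have : (3:ℝ)/2 = 1/2 + 1 := by norm_num
      rw [this, Real.Gamma_add_one (by norm_num), Real.Gamma_one_half_eq]
      ring
    have hsp : Real.sqrt π ^ 3 = π * Real.sqrt π := by
      rw [pow_succ, Real.sq_sqrt Real.pi_nonneg]
    have hspne : Real.sqrt π ≠ 0 := by positivity
    rw [show ((3:ℕ):ℝ) = (3:ℝ) by norm_num] at *
    rw [hG, hsp]
    simp only [ENNReal.ofReal_one, one_pow, one_mul]
    rw [ENNReal.toReal_ofReal (by positivity)]
    field_simp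
  rw [measureReal_def, hvol]
  have step2 : (∫ y in Set.Ioi (0:ℝ), y ^ (3 - 1) • h y)
      = ∫ r in Set.Ioi (1:ℝ), (β ^ 2 + 1) * r ^ 4 / (β ^ 2 + r ^ 2) ^ 3 := by
    have heq : ∀ y : ℝ, y ^ (3 - 1) • h y
        = (Set.Ici (1:ℝ)).indicator (fun r => (β ^ 2 + 1) * r ^ 4 / (β ^ 2 + r ^ 2) ^ 3) y := by
      intro y
      by_cases hy : (1:ℝ) ≤ y
      · simp only [hh, Set.indicator_of_mem (Set.mem_Ici.2 hy), smul_eq_mul]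
        ring
      · simp [hh, Set.indicator_of_notMem (fun hmem => hy (Set.mem_Ici.1 hmem))]
    simp only [heq]
    rw [integral_indicator measurableSet_Ici, Measure.restrict_restrict measurableSet_Ici]
    have hint : Set.Ici (1:ℝ) ∩ Set.Ioi 0 = Set.Ici 1 :=
      Set.inter_eq_left.mpr (fun x hx => Set.mem_Ioi.2 (lt_of_lt_of_le one_pos (Set.mem_Ici.1 hx)))
    rw [hint]
    exact integral_Ici_eq_integral_Ioi
  rw [step2, aux_radial_int β hβ]
  have h1 : (β ^ 2 + 1) ≠ 0 := by positivity
  have hb0 : β ≠ 0 := hβ.ne'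
  have h2 : (1 + β ^ 2) ≠ 0 := by positivity
  simp only [smul_eq_mul, nsmul_eq_mul]
  push_cast
  field_simp
  ring
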